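/- Let G = (V,E) be a homogeneous graph on p vertices, and σ an ordering of V which is a Hasse tree based elimination scheme for G. Let Σ ∈ P_{G_σ}, and let Σ = LDLᵀ denote its modified Cholesky decomposition. Then for any maximal clique C of G, det((Σ⁻¹)_{σ(C)}) = ∏_{i ∈ σ(C)} 1/D_{ii}, where (Σ⁻¹)_{σ(C)} denotes the principal submatrix of Σ⁻¹ with rows and columns indexed by σ(C) = {σ(v) : v ∈ C}. -/

import Mathlib

open Matrix BigOperators

/-- The closed neighborhood `N[v]` of a vertex `v`. -/
def cNbhd {V : Type*} (G : SimpleGraph V) (v : V) : Set V :=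
  {u | u = v ∨ G.Adj u v}

/-- A graph is homogeneous (co-chordal) if for every edge `(v,v')`, the closed
neighborhoods are nested. -/
def Homogeneous {V : Type*} (G : SimpleGraph V) : Prop :=
  ∀ v v' : V, G.Adj v v' → cNbhd G v' ⊆ cNbhd G v ∨ cNbhd G v ⊆ cNbhd G v'

/-- `σ` is a Hasse tree based elimination scheme: whenever `u → v`
(`N[v] ⊆ N[u]`) and `N[u] ≠ N[v]`, one has `σ(u) > σ(v)`. -/
def HasseElimScheme {V : Type*} {p : ℕ} (G : SimpleGraph V) (σ : V ≃ Fin p) : Prop :=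
  ∀ u v : V, cNbhd G v ⊆ cNbhd G u → cNbhd G u ≠ cNbhd G v → σ v < σ u

/-- `σ` is a perfect vertex elimination scheme for `G`. -/
def PerfectElimScheme {V : Type*} {p : ℕ} (G : SimpleGraph V) (σ : V ≃ Fin p) : Prop :=
  ∀ i j k : Fin p, i < j → j < k →
    G.Adj (σ.symm j) (σ.symm i) → G.Adj (σ.symm k) (σ.symm i) →
      G.Adj (σ.symm k) (σ.symm j)

/-- `G` has an induced cycle on at least `4` vertices. -/
def HasInducedCycleGE4 {V : Type*} (G : SimpleGraph V) : Prop :=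
  ∃ (n : ℕ) (f : Fin n → V), 4 ≤ n ∧ Function.Injective f ∧
    ∀ i j : Fin n, G.Adj (f i) (f j) ↔
      (((i : ℕ) + 1) % n = (j : ℕ) ∨ ((j : ℕ) + 1) % n = (i : ℕ))

/-- A graph is decomposable (chordal) if it has no induced cycle of length `≥ 4`. -/
def Decomposable {V : Type*} (G : SimpleGraph V) : Prop := ¬ HasInducedCycleGE4 G

/-- `G` has an induced path on `4` vertices. -/
def HasInducedPath4 {V : Type*} (G : SimpleGraph V) : Prop :=
  ∃ a b c d : V, a ≠ b ∧ a ≠ c ∧ a ≠ d ∧ b ≠ c ∧ b ≠ d ∧ c ≠ d ∧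
    G.Adj a b ∧ G.Adj b c ∧ G.Adj c d ∧ ¬ G.Adj a c ∧ ¬ G.Adj a d ∧ ¬ G.Adj b d

/-- `G` has an induced cycle on `4` vertices. -/
def HasInducedCycle4 {V : Type*} (G : SimpleGraph V) : Prop :=
  ∃ a b c d : V, a ≠ b ∧ a ≠ c ∧ a ≠ d ∧ b ≠ c ∧ b ≠ d ∧ c ≠ d ∧
    G.Adj a b ∧ G.Adj b c ∧ G.Adj c d ∧ G.Adj d a ∧ ¬ G.Adj a c ∧ ¬ G.Adj b d

/-- `C` is a maximal clique of `G`. -/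
def IsMaxClique {V : Type*} (G : SimpleGraph V) (C : Finset V) : Prop :=
  G.IsClique (C : Set V) ∧
    ∀ C' : Finset V, G.IsClique (C' : Set V) → C ⊆ C' → C = C'

/-- Membership in the class `𝓛_{G_σ}`: unit diagonal, and `L i j = 0` whenever
`i < j` or the corresponding vertices are not adjacent. -/
def memL {V : Type*} {p : ℕ} (G : SimpleGraph V) (σ : V ≃ Fin p)
    (L : Matrix (Fin p) (Fin p) ℝ) : Prop :=
  (∀ i, L i i = 1) ∧
    ∀ i j : Fin p, i ≠ j → (i < j ∨ ¬ G.Adj (σ.symm i) (σ.symm j)) → L i j = 0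

/-- Membership in the class `P_{G_σ}`: positive definite, with `A i j = 0` whenever
the corresponding vertices are distinct and not adjacent. -/
def memP {V : Type*} {p : ℕ} (G : SimpleGraph V) (σ : V ≃ Fin p)
    (A : Matrix (Fin p) (Fin p) ℝ) : Prop :=
  A.PosDef ∧ ∀ i j : Fin p, i ≠ j → ¬ G.Adj (σ.symm i) (σ.symm j) → A i j = 0

/-- Lower triangular with unit diagonal. -/
def LowerUnitri {p : ℕ} (L : Matrix (Fin p) (Fin p) ℝ) : Prop :=
  (∀ i, L i i = 1) ∧ ∀ i j : Fin p, i < j → L i j = 0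

/-- Diagonal matrix with positive diagonal entries. -/
def PosDiag {p : ℕ} (D : Matrix (Fin p) (Fin p) ℝ) : Prop :=
  (∀ i j : Fin p, i ≠ j → D i j = 0) ∧ ∀ i, 0 < D i i

/-- Determinant of the principal submatrix of `A` with rows and columns in `S`. -/
noncomputable def principalDet {p : ℕ} (A : Matrix (Fin p) (Fin p) ℝ)
    (S : Finset (Fin p)) : ℝ :=
  (A.submatrix (fun x : S => (x : Fin p)) (fun x : S => (x : Fin p))).det

section AuxLemmas

variable {V : Type*} {p : ℕ} (G : SimpleGraph V) (σ : V ≃ Fin p)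

lemma nbhd_mono (hhom : Homogeneous G) (hσ : HasseElimScheme G σ)
    {i j : Fin p} (hij : j < i) (hadj : G.Adj (σ.symm i) (σ.symm j)) :
    cNbhd G (σ.symm j) ⊆ cNbhd G (σ.symm i) := by
  rcases hhom _ _ hadj with h | h
  · exact h
  · by_cases heq : cNbhd G (σ.symm j) = cNbhd G (σ.symm i)
    · rw [heq]
    · have h2 := hσ (σ.symm j) (σ.symm i) h heq
      simp only [Equiv.apply_symm_apply] at h2
      exact absurd h2 (not_lt.mpr hij.le)

/-- k < j < i, Adj(v_i,v_k), Adj(v_j,v_k) ⇒ Adj(v_i,v_j). -/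
lemma adj_transA (hhom : Homogeneous G) (hσ : HasseElimScheme G σ)
    {i j k : Fin p} (hkj : k < j) (hji : j < i)
    (h1 : G.Adj (σ.symm i) (σ.symm k)) (h2 : G.Adj (σ.symm j) (σ.symm k)) :
    G.Adj (σ.symm i) (σ.symm j) := by
  have hsub := nbhd_mono G σ hhom hσ hkj h2
  have hmem : σ.symm i ∈ cNbhd G (σ.symm k) := Or.inr h1
  rcases hsub hmem with he | ha
  · exact absurd (σ.symm.injective he) (hji.ne')
  · exact ha

/-- j < k < i, Adj(v_i,v_k), Adj(v_k,v_j) ⇒ Adj(v_i,v_j). -/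
lemma adj_transB (hhom : Homogeneous G) (hσ : HasseElimScheme G σ)
    {i j k : Fin p} (hjk : j < k) (hki : k < i)
    (h1 : G.Adj (σ.symm i) (σ.symm k)) (h2 : G.Adj (σ.symm k) (σ.symm j)) :
    G.Adj (σ.symm i) (σ.symm j) := by
  have hsub := nbhd_mono G σ hhom hσ hki h1
  have hmem : σ.symm j ∈ cNbhd G (σ.symm k) := Or.inr h2.symm
  rcases hsub hmem with he | ha
  · exact absurd (σ.symm.injective he) (hjk.trans hki).ne
  · exact ha.symm

end AuxLemmas

section Fillin

variable {V : Type*} {p : ℕ} (G : SimpleGraph V) (σ : V ≃ Fin p)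
variable (A L D : Matrix (Fin p) (Fin p) ℝ)

lemma diag_eq (hD : (∀ i j : Fin p, i ≠ j → D i j = 0)) :
    D = Matrix.diagonal (fun k => D k k) := by
  ext a b
  by_cases h : a = b
  · subst h; simp
  · simp [Matrix.diagonal, h, hD a b h]

lemma A_entry (hD : (∀ i j : Fin p, i ≠ j → D i j = 0)) (hdec : A = L * D * Lᵀ) :
    ∀ i j, A i j = ∑ k, L i k * D k k * L j k := by
  intro i j
  have h1 : L * Matrix.diagonal (fun k => D k k) = Matrix.of (fun a b => L a b * D b b) := by
    ext a b; simp [Matrix.mul_diagonal]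
  conv_lhs => rw [hdec, diag_eq D hD, h1]
  simp [Matrix.mul_apply, Matrix.transpose_apply]

lemma fillin (hhom : Homogeneous G) (hσ : HasseElimScheme G σ)
    (hA : ∀ i j : Fin p, i ≠ j → ¬ G.Adj (σ.symm i) (σ.symm j) → A i j = 0)
    (hL1 : ∀ i, L i i = 1) (hL2 : ∀ i j : Fin p, i < j → L i j = 0)
    (hD0 : ∀ i j : Fin p, i ≠ j → D i j = 0) (hDpos : ∀ i, 0 < D i i)
    (hdec : A = L * D * Lᵀ) :
    ∀ j i : Fin p, j < i → ¬ G.Adj (σ.symm i) (σ.symm j) → L i j = 0 := by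
  suffices H : ∀ n, ∀ j : Fin p, (j : ℕ) = n → ∀ i, j < i →
      ¬ G.Adj (σ.symm i) (σ.symm j) → L i j = 0 by
    intro j i h1 h2; exact H j j rfl i h1 h2
  intro n
  induction n using Nat.strong_induction_on with
  | _ n IH =>
    intro j hj i hji hadj
    have h0 : A i j = 0 := hA i j hji.ne' hadj
    have hsum : A i j = L i j * D j j := by
      rw [A_entry A L D hD0 hdec i j, Finset.sum_eq_single j]
      · rw [hL1 j, mul_one]
      · intro k _ hkj
        rcases lt_or_gt_of_ne hkj with hk | hk
        · by_cases hLik : L i k = 0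
          · simp [hLik]
          by_cases hLjk : L j k = 0
          · simp [hLjk]
          exfalso
          have hkn : (k : ℕ) < n := by
            have : (k : ℕ) < (j : ℕ) := hk
            omega
          have hadjik : G.Adj (σ.symm i) (σ.symm k) := by
            by_contra hc; exact hLik (IH _ hkn k rfl i (hk.trans hji) hc)
          have hadjjk : G.Adj (σ.symm j) (σ.symm k) := by
            by_contra hc; exact hLjk (IH _ hkn k rfl j hk hc)
          exact hadj (adj_transA G σ hhom hσ hk hji hadjik hadjjk)
        · simp [hL2 j k hk]
      · intro h; exact absurd (Finset.mem_univ j) h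
    have hz : L i j * D j j = 0 := by rw [← hsum, h0]
    exact (mul_eq_zero.mp hz).resolve_right (hDpos j).ne'

end Fillin

section InvPattern

variable {V : Type*} {p : ℕ} (G : SimpleGraph V) (σ : V ≃ Fin p)
variable (L M : Matrix (Fin p) (Fin p) ℝ)

/-- Pattern of the inverse of a unit lower-triangular matrix with the graph pattern. -/
lemma inv_pattern (hhom : Homogeneous G) (hσ : HasseElimScheme G σ)
    (hL1 : ∀ i, L i i = 1) (hL2 : ∀ i j : Fin p, i < j → L i j = 0)
    (hLpat : ∀ j i : Fin p, j < i → ¬ G.Adj (σ.symm i) (σ.symm j) → L i j = 0)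
    (hLM : L * M = 1) :
    ∀ i j : Fin p,
      (i ≠ j → (i < j ∨ ¬ G.Adj (σ.symm i) (σ.symm j)) → M i j = 0) ∧ (i = j → M i j = 1) := by
  suffices H : ∀ n, ∀ i : Fin p, (i : ℕ) = n → ∀ j : Fin p,
      (i ≠ j → (i < j ∨ ¬ G.Adj (σ.symm i) (σ.symm j)) → M i j = 0) ∧ (i = j → M i j = 1) by
    intro i j; exact H i i rfl j
  intro n
  induction n using Nat.strong_induction_on with
  | _ n IH =>
    intro i hi j
    have hsum : ∑ k, L i k * M k j = (if i = j then (1 : ℝ) else 0) := by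
      have h := congrFun (congrFun hLM i) j
      simpa [Matrix.mul_apply, Matrix.one_apply] using h
    have IH' : ∀ k : Fin p, k < i → ∀ j : Fin p,
        (k ≠ j → (k < j ∨ ¬ G.Adj (σ.symm k) (σ.symm j)) → M k j = 0) ∧ (k = j → M k j = 1) := by
      intro k hk j'
      have hkn : (k : ℕ) < n := by
        have : (k : ℕ) < (i : ℕ) := hk
        omega
      exact IH _ hkn k rfl j'
    constructor
    · intro hne hcond
      have hz : ∀ k ∈ Finset.univ, k ≠ i → L i k * M k j = 0 := by
        intro k _ hki
        rcases lt_or_gt_of_ne hki with hk | hk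
        · by_cases hLik : L i k = 0
          · simp [hLik]
          have hik : G.Adj (σ.symm i) (σ.symm k) := by
            by_contra hc; exact hLik (hLpat k i hk hc)
          rcases hcond with hij | hnadj
          · have : M k j = 0 :=
              ((IH' k hk j).1 (hk.trans hij).ne (Or.inl (hk.trans hij)))
            simp [this]
          · rcases lt_trichotomy k j with h1 | h1 | h1
            · have : M k j = 0 := ((IH' k hk j).1 h1.ne (Or.inl h1))
              simp [this]
            · exact absurd hik (h1 ▸ hnadj)
            · by_cases hMkj : M k j = 0
              · simp [hMkj]
              exfalso
              have hkj : G.Adj (σ.symm k) (σ.symm j) := by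
                by_contra hc
                exact hMkj ((IH' k hk j).1 h1.ne' (Or.inr hc))
              exact hnadj (adj_transB G σ hhom hσ h1 hk hik hkj)
        · simp [hL2 i k hk]
      have h1 := Finset.sum_eq_single_of_mem i (Finset.mem_univ i) (fun k hk hki => hz k hk hki)
      rw [h1, hL1 i, one_mul, if_neg hne] at hsum
      exact hsum
    · intro hij
      subst hij
      have hz : ∀ k ∈ Finset.univ, k ≠ i → L i k * M k i = 0 := by
        intro k _ hki
        rcases lt_or_gt_of_ne hki with hk | hk
        · have : M k i = 0 := ((IH' k hk i).1 hk.ne (Or.inl hk))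
          simp [this]
        · simp [hL2 i k hk]
      have h1 := Finset.sum_eq_single_of_mem i (Finset.mem_univ i) (fun k hk hki => hz k hk hki)
      rw [h1, hL1 i, one_mul, if_pos rfl] at hsum
      exact hsum

end InvPattern

/-- For a homogeneous graph with a Hasse tree based elimination scheme and
`Σ ∈ P_{G_σ}` with modified Cholesky decomposition `Σ = LDLᵀ`, for every maximal
clique `C`, `det((Σ⁻¹)_{σ(C)}) = ∏_{i ∈ σ(C)} 1 / D_{ii}`. -/
theorem statement8 {V : Type*} [Fintype V] {p : ℕ} (G : SimpleGraph V) (σ : V ≃ Fin p)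
    (hhom : Homogeneous G) (hσ : HasseElimScheme G σ)
    (A L D : Matrix (Fin p) (Fin p) ℝ)
    (hA : memP G σ A) (hL : LowerUnitri L) (hD : PosDiag D)
    (hdec : A = L * D * Lᵀ)
    (C : Finset V) (hC : IsMaxClique G C) :
    principalDet A⁻¹ (C.image (fun v => σ v)) =
      ∏ i ∈ C.image (fun v => σ v), 1 / D i i := by
  classical
  obtain ⟨hL1, hL2⟩ := hL
  obtain ⟨hD0, hDpos⟩ := hD
  have hfill := fillin G σ A L D hhom hσ hA.2 hL1 hL2 hD0 hDpos hdec
  have hLlow : L.BlockTriangular OrderDual.toDual := fun i j h => hL2 i j h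
  have hdetL : L.det = 1 := by
    rw [Matrix.det_of_lowerTriangular L hLlow]
    simp [hL1]
  have hLM : L * L⁻¹ = 1 := Matrix.mul_nonsing_inv L (by simp [hdetL])
  have hML : L⁻¹ * L = 1 := Matrix.nonsing_inv_mul L (by simp [hdetL])
  have hMpat := inv_pattern G σ L L⁻¹ hhom hσ hL1 hL2 hfill hLM
  set T := C.image (fun v => σ v) with hT
  have hTmem : ∀ j : Fin p, j ∈ T ↔ σ.symm j ∈ C := by
    intro j
    simp only [hT, Finset.mem_image]
    constructor
    · rintro ⟨c, hc, rfl⟩; simpa using hc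
    · intro h; exact ⟨σ.symm j, h, by simp⟩
  have hMT : ∀ i j : Fin p, j ∈ T → i ∉ T → L⁻¹ i j = 0 := by
    intro i j hj hi
    have hne : i ≠ j := fun h => hi (h ▸ hj)
    rcases lt_or_gt_of_ne hne with h | h
    · exact (hMpat i j).1 hne (Or.inl h)
    · by_contra hM
      have hadj : G.Adj (σ.symm i) (σ.symm j) := by
        by_contra hc; exact hM ((hMpat i j).1 hne (Or.inr hc))
      have hsub := nbhd_mono G σ hhom hσ h hadj
      have hvjC : σ.symm j ∈ C := (hTmem j).mp hj
      have hviC : σ.symm i ∉ C := fun h' => hi ((hTmem i).mpr h')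
      have key : ∀ b' : V, b' ∈ C → b' ≠ σ.symm i → G.Adj (σ.symm i) b' := by
        intro b' hb' hbne
        have hbmem : b' ∈ cNbhd G (σ.symm j) := by
          by_cases hbj : b' = σ.symm j
          · exact Or.inl hbj
          · exact Or.inr (hC.1 hb' hvjC hbj)
        rcases hsub hbmem with he | hb2
        · exact absurd he hbne
        · exact hb2.symm
      have hclq : G.IsClique ((insert (σ.symm i) C : Finset V) : Set V) := by
        rw [SimpleGraph.isClique_iff]
        intro a ha b hb hab
        simp only [Finset.coe_insert, Set.mem_insert_iff, Finset.mem_coe] at ha hb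
        rcases ha with ha | ha <;> rcases hb with hb | hb
        · exact absurd (ha.trans hb.symm) hab
        · subst ha; exact key b hb (Ne.symm hab)
        · subst hb; exact (key a ha hab).symm
        · exact hC.1 ha hb hab
      have hCeq := hC.2 _ hclq (Finset.subset_insert _ _)
      exact hviC (hCeq ▸ Finset.mem_insert_self _ _)
  set d : Fin p → ℝ := fun k => (D k k)⁻¹ with hd
  set Dinv : Matrix (Fin p) (Fin p) ℝ := Matrix.diagonal d with hDinvdef
  have hDDinv : D * Dinv = 1 := by
    rw [diag_eq D hD0, hDinvdef, Matrix.diagonal_mul_diagonal]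
    have h3 : (fun k => D k k * d k) = fun _ => (1 : ℝ) :=
      funext fun k => mul_inv_cancel₀ (hDpos k).ne'
    rw [h3]
    exact Matrix.diagonal_one
  have h1T : Lᵀ * (L⁻¹)ᵀ = 1 := by rw [← Matrix.transpose_mul, hML, Matrix.transpose_one]
  have hright : A * ((L⁻¹)ᵀ * Dinv * L⁻¹) = 1 := by
    rw [hdec]
    calc L * D * Lᵀ * ((L⁻¹)ᵀ * Dinv * L⁻¹)
        = L * (D * ((Lᵀ * (L⁻¹)ᵀ) * (Dinv * L⁻¹))) := by simp only [Matrix.mul_assoc]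
      _ = 1 := by
          rw [h1T, Matrix.one_mul, ← Matrix.mul_assoc D, hDDinv, Matrix.one_mul, hLM]
  have hAinv : A⁻¹ = (L⁻¹)ᵀ * Dinv * L⁻¹ := Matrix.inv_eq_right_inv hright
  set f : {x // x ∈ T} → Fin p := fun x => (x : Fin p) with hf
  have hfinj : Function.Injective f := Subtype.coe_injective
  have hentry : ∀ a b : Fin p, ((L⁻¹)ᵀ * Dinv * L⁻¹) a b = ∑ k, L⁻¹ k a * d k * L⁻¹ k b := by
    intro a b
    have h2 : (L⁻¹)ᵀ * Dinv = Matrix.of (fun a k => L⁻¹ k a * d k) := by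
      ext a k
      simp [hDinvdef, Matrix.mul_diagonal, Matrix.transpose_apply]
    rw [h2]
    simp [Matrix.mul_apply]
  have hDsub : Dinv.submatrix f f = Matrix.diagonal (fun x : {x // x ∈ T} => d (f x)) := by
    rw [hDinvdef, Matrix.submatrix_diagonal d f hfinj]
    rfl
  have hsubeq : (A⁻¹).submatrix f f =
      ((L⁻¹).submatrix f f)ᵀ * (Dinv.submatrix f f) * ((L⁻¹).submatrix f f) := by
    have h2 : ((L⁻¹).submatrix f f)ᵀ * (Dinv.submatrix f f) =
        Matrix.of (fun (a k : {x // x ∈ T}) => L⁻¹ (f k) (f a) * d (f k)) := by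
      rw [hDsub]
      ext a k
      simp [Matrix.mul_diagonal, Matrix.transpose_apply]
    ext a b
    rw [hAinv, Matrix.submatrix_apply, hentry, Matrix.mul_apply]
    simp only [h2, Matrix.of_apply, Matrix.submatrix_apply]
    have hz : ∀ k ∈ Finset.univ, k ∉ T → L⁻¹ k (f a) * d k * L⁻¹ k (f b) = 0 := by
      intro k _ hk
      rw [hMT k (f a) a.2 hk]
      ring
    calc (∑ k : Fin p, L⁻¹ k (f a) * d k * L⁻¹ k (f b))
        = ∑ k ∈ T, L⁻¹ k (f a) * d k * L⁻¹ k (f b) :=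
          (Finset.sum_subset T.subset_univ (fun k h1' h2' => hz k h1' h2')).symm
      _ = ∑ x : {x // x ∈ T}, L⁻¹ (f x) (f a) * d (f x) * L⁻¹ (f x) (f b) :=
          (Finset.sum_coe_sort T _).symm
  have hdetM : ((L⁻¹).submatrix f f).det = 1 := by
    have htri : ((L⁻¹).submatrix f f).BlockTriangular OrderDual.toDual := by
      intro a b h
      have hab : a < b := h
      have hab' : (a : Fin p) < (b : Fin p) := hab
      exact (hMpat ↑a ↑b).1 hab'.ne (Or.inl hab')
    rw [Matrix.det_of_lowerTriangular _ htri]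
    exact Finset.prod_eq_one (fun x _ => (hMpat ↑x ↑x).2 rfl)
  have hdetD : (Dinv.submatrix f f).det = ∏ x : {x // x ∈ T}, d (f x) := by
    rw [hDsub, Matrix.det_diagonal]
  show ((A⁻¹).submatrix f f).det = ∏ i ∈ T, 1 / D i i
  rw [hsubeq, Matrix.det_mul, Matrix.det_mul, Matrix.det_transpose, hdetM, hdetD,
    one_mul, mul_one]
  rw [Finset.prod_coe_sort T (fun i => d i)]
  exact Finset.prod_congr rfl (fun i _ => (one_div (D i i)).symm)
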